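/- (Theorem 1, semantic form.) The operator G : (Set (α × α))⁵ → (Set (α × α))⁵ defined by G(R)≺ = {(a,b) | ∃ c, (a,c) ∈ R⪯ ∧ (c,b) ∈ R◁}; G(R)⪯ = {(a,b) | a ∈ F {c | (c,b) ∈ R≺}}; G(R)⊀ = {(a,b) | b ∈ F ∅ ∨ (∃ c, (a,c) ∈ R⋠ ∧ (c,b) ∈ R◁) ∨ F ∅ = ∅}; G(R)⋠ = {(a,b) | a ∉ F {c | (c,b) ∉ R⊀}}; G(R)◁ = {(a,b) | a ∈ F {c | (c,a) ∈ R≺} ∧ b ∉ F {c | (c,a) ∉ R⊀} ∧ (b ∈ F {c | (c,a) ∈ R⪯} ∨ ∀ c, c ∈ F {c' | (c',a) ∉ R⋠} → c ∈ F {c' | (c',a) ∈ R≺})} is monotone with respect to componentwise inclusion of quintuples, and its least fixed point is exactly the intended quintuple I given by I≺ = {(a,b) | stage(a) < stage(b)}, I⪯ = {(a,b) | stage(a) ≤ stage(b) ∧ stage(a) ≤ f}, I⊀ = {(a,b) | stage(a) ≥ stage(b)}, I⋠ = {(a,b) | stage(a) > stage(b) ∨ stage(a) = f + 1}, I◁ =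 {(a,b) | stage(a) + 1 = stage(b)}. In particular, the stage-ordering relations are themselves definable as the (simultaneous) least fixed point of an operator in which the candidate relations occur only positively. -/
import Mathlib


/- The stage of an atom `a` under the staged fixed-point computation
(Algorithm 2): the least `l` with `a ∈ F^[l] ∅` if `a` belongs to the
fixed point `F^[f] ∅`, and `f + 1` otherwise. -/
open Classical in
noncomputable def stage {α : Type*} (F : Set α → Set α) (f : ℕ) (a : α) : ℕ :=
  if a ∈ F^[f] (∅ : Set α) then sInf {l : ℕ | a ∈ F^[l] (∅ : Set α)} else f + 1

/- A quintuple of binary relations on `α`, in the order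
(≺ strictly-before, ⪯ before, ⊀ not-strictly-before, ⋠ not-before,
◁ immediately-before). -/
abbrev Quint (α : Type*) :=
  Set (α × α) × Set (α × α) × Set (α × α) × Set (α × α) × Set (α × α)

namespace Quint

variable {α : Type*}

def lt (R : Quint α) : Set (α × α) := R.1
def le (R : Quint α) : Set (α × α) := R.2.1
def nlt (R : Quint α) : Set (α × α) := R.2.2.1
def nle (R : Quint α) : Set (α × α) := R.2.2.2.1
def imm (R : Quint α) : Set (α × α) := R.2.2.2.2

end Quint

/- The semantic stage-axiom operator (equations (1)–(5) of the paper). -/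
def G {α : Type*} (F : Set α → Set α) (R : Quint α) : Quint α :=
  ({p : α × α | ∃ c : α, (p.1, c) ∈ R.le ∧ (c, p.2) ∈ R.imm},
   {p : α × α | p.1 ∈ F {c : α | (c, p.2) ∈ R.lt}},
   {p : α × α | p.2 ∈ F ∅ ∨
      (∃ c : α, (p.1, c) ∈ R.nle ∧ (c, p.2) ∈ R.imm) ∨ F ∅ = ∅},
   {p : α × α | p.1 ∉ F {c : α | (c, p.2) ∉ R.nlt}},
   {p : α × α | p.1 ∈ F {c : α | (c, p.1) ∈ R.lt} ∧
      p.2 ∉ F {c : α | (c, p.1) ∉ R.nlt} ∧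
      (p.2 ∈ F {c : α | (c, p.1) ∈ R.le} ∨
        ∀ c : α, c ∈ F {c' : α | (c', p.1) ∉ R.nle} →
          c ∈ F {c' : α | (c', p.1) ∈ R.lt})})

/- The intended quintuple of stage-ordering relations. -/
noncomputable def I {α : Type*} (F : Set α → Set α) (f : ℕ) : Quint α :=
  ({p : α × α | stage F f p.1 < stage F f p.2},
   {p : α × α | stage F f p.1 ≤ stage F f p.2 ∧ stage F f p.1 ≤ f},
   {p : α × α | stage F f p.1 ≥ stage F f p.2},
   {p : α × α | stage F f p.1 > stage F f p.2 ∨ stage F f p.1 = f + 1},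
   {p : α × α | stage F f p.1 + 1 = stage F f p.2})

section StageAux

variable {α : Type*} {F : Set α → Set α} {f : ℕ}

lemma iterEmpty_mono (hF : Monotone F) : Monotone fun j => F^[j] (∅ : Set α) := by
  apply monotone_nat_of_le_succ
  intro n
  induction n with
  | zero => simp
  | succ n ih =>
    rw [Function.iterate_succ_apply', Function.iterate_succ_apply']
    exact hF ih

lemma iterEmpty_stab (hF : Monotone F) (hf : F^[f + 1] (∅ : Set α) = F^[f] ∅) :
    ∀ j, f ≤ j → F^[j] (∅ : Set α) = F^[f] ∅ := by
  intro j hj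
  induction j with
  | zero => rw [Nat.le_zero.mp hj]
  | succ j ih =>
    rcases Nat.lt_or_ge j f with h | h
    · have : f = j + 1 := by omega
      rw [this]
    · rw [Function.iterate_succ_apply', ih h, ← Function.iterate_succ_apply' F f ∅, hf]

lemma mem_iterEmpty_iff (hF : Monotone F) (hf : F^[f + 1] (∅ : Set α) = F^[f] ∅)
    (a : α) (l : ℕ) :
    a ∈ F^[l] (∅ : Set α) ↔ stage F f a ≤ l ∧ stage F f a ≤ f := by
  unfold stage
  by_cases h : a ∈ F^[f] (∅ : Set α)
  · rw [if_pos h]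
    constructor
    · exact fun hl => ⟨Nat.sInf_le hl, Nat.sInf_le h⟩
    · rintro ⟨h1, -⟩
      have hne : {l : ℕ | a ∈ F^[l] (∅ : Set α)}.Nonempty := ⟨f, h⟩
      have hmem : a ∈ F^[sInf {l : ℕ | a ∈ F^[l] (∅ : Set α)}] (∅ : Set α) :=
        Nat.sInf_mem hne
      exact iterEmpty_mono hF h1 hmem
  · rw [if_neg h]
    constructor
    · intro hl
      exfalso
      rcases le_or_gt l f with hlf | hlf
      · exact h (iterEmpty_mono hF hlf hl)
      · rw [iterEmpty_stab hF hf l hlf.le] at hl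
        exact h hl
    · exact fun h' => absurd h'.2 (by omega)

lemma stage_pos (a : α) : 1 ≤ stage F f a := by
  unfold stage
  by_cases h : a ∈ F^[f] (∅ : Set α)
  · rw [if_pos h]
    rcases Nat.eq_zero_or_pos (sInf {l : ℕ | a ∈ F^[l] (∅ : Set α)}) with h0 | h1
    · exfalso
      have hmem := Nat.sInf_mem (⟨f, h⟩ : {l : ℕ | a ∈ F^[l] (∅ : Set α)}.Nonempty)
      rw [h0] at hmem
      simpa using hmem
    · exact h1
  · rw [if_neg h]; omega

lemma stage_le_succ (a : α) : stage F f a ≤ f + 1 := by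
  unfold stage
  by_cases h : a ∈ F^[f] (∅ : Set α)
  · rw [if_pos h]
    exact (Nat.sInf_le h).trans (Nat.le_succ f)
  · rw [if_neg h]

lemma F_stageLt (hF : Monotone F) (hf : F^[f + 1] (∅ : Set α) = F^[f] ∅)
    (m : ℕ) (hm1 : 1 ≤ m) (hm2 : m ≤ f + 1) :
    F {c : α | stage F f c < m} = F^[m] (∅ : Set α) := by
  obtain ⟨m', rfl⟩ : ∃ m', m = m' + 1 := ⟨m - 1, by omega⟩
  have hset : {c : α | stage F f c < m' + 1} = F^[m'] (∅ : Set α) := by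
    ext c
    rw [mem_iterEmpty_iff hF hf]
    simp only [Set.mem_setOf_eq]
    omega
  rw [hset, ← Function.iterate_succ_apply' F m' ∅]

lemma exists_stage (hF : Monotone F) (hf : F^[f + 1] (∅ : Set α) = F^[f] ∅)
    (hfmin : ∀ j : ℕ, F^[j + 1] (∅ : Set α) = F^[j] ∅ → f ≤ j)
    (k : ℕ) (hk1 : 1 ≤ k) (hk2 : k ≤ f) : ∃ c : α, stage F f c = k := by
  obtain ⟨k', rfl⟩ : ∃ k', k = k' + 1 := ⟨k - 1, by omega⟩
  have hne : F^[k' + 1] (∅ : Set α) ≠ F^[k'] ∅ := by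
    intro h
    exact absurd (hfmin k' h) (by omega)
  have hsub : F^[k'] (∅ : Set α) ⊆ F^[k' + 1] ∅ := iterEmpty_mono hF (Nat.le_succ k')
  obtain ⟨c, hc1, hc2⟩ := Set.exists_of_ssubset (hsub.ssubset_of_ne (Ne.symm hne))
  refine ⟨c, ?_⟩
  rw [mem_iterEmpty_iff hF hf] at hc1
  rw [mem_iterEmpty_iff hF hf] at hc2
  omega

lemma Fempty_eq_iff (hf : F^[f + 1] (∅ : Set α) = F^[f] ∅)
    (hfmin : ∀ j : ℕ, F^[j + 1] (∅ : Set α) = F^[j] ∅ → f ≤ j) :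
    F (∅ : Set α) = ∅ ↔ f = 0 := by
  constructor
  · intro h
    have := hfmin 0 (by simpa using h)
    omega
  · intro h
    subst h
    simpa using hf

end StageAux

theorem stage_axiom_operator_monotone_and_lfp_eq_intended
    {α : Type*} [Fintype α] (F : Set α → Set α) (hF : Monotone F)
    (f : ℕ) (hf : F^[f + 1] ∅ = F^[f] ∅)
    (hfmin : ∀ j : ℕ, F^[j + 1] ∅ = F^[j] ∅ → f ≤ j) :
    Monotone (G F) ∧
    G F (I F f) = I F f ∧
    ∀ R : Quint α, G F R = R → I F f ≤ R := by
  refine ⟨?_, ?_, ?_⟩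
  · -- monotonicity
    intro R T h
    simp only [Prod.le_def] at h ⊢
    obtain ⟨h1, h2, h3, h4, h5⟩ := h
    have h1' : R.lt ⊆ T.lt := h1
    have h2' : R.le ⊆ T.le := h2
    have h3' : R.nlt ⊆ T.nlt := h3
    have h4' : R.nle ⊆ T.nle := h4
    have h5' : R.imm ⊆ T.imm := h5
    refine ⟨?_, ?_, ?_, ?_, ?_⟩
    · rintro ⟨a, b⟩ ⟨c, hc1, hc2⟩
      exact ⟨c, h2' hc1, h5' hc2⟩
    · rintro ⟨a, b⟩ hp
      exact hF (fun c hc => h1' hc) hp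
    · rintro ⟨a, b⟩ (h | ⟨c, hc1, hc2⟩ | h)
      · exact Or.inl h
      · exact Or.inr (Or.inl ⟨c, h4' hc1, h5' hc2⟩)
      · exact Or.inr (Or.inr h)
    · rintro ⟨a, b⟩ hp hmem
      exact hp (hF (fun c (hc : (c, b) ∉ T.nlt) hcc => hc (h3' hcc)) hmem)
    · rintro ⟨a, b⟩ ⟨hA, hB, hC⟩
      refine ⟨hF (fun c hc => h1' hc) hA, ?_, ?_⟩
      · exact fun hmem => hB (hF (fun c (hc : (c, a) ∉ T.nlt) hcc => hc (h3' hcc)) hmem)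
      · rcases hC with hC | hC
        · exact Or.inl (hF (fun c hc => h2' hc) hC)
        · refine Or.inr fun c hc => ?_
          have hc2 : c ∈ F {c' | (c', a) ∉ R.nle} :=
            hF (fun c' (hc' : (c', a) ∉ T.nle) hcc => hc' (h4' hcc)) hc
          exact hF (fun c' hc' => h1' hc') (hC c hc2)
  · -- fixed point
    have hm : ∀ (c : α) (l : ℕ), c ∈ F^[l] (∅ : Set α) ↔ stage F f c ≤ l ∧ stage F f c ≤ f :=
      mem_iterEmpty_iff hF hf
    have hp1 : ∀ c : α, 1 ≤ stage F f c := fun c => stage_pos c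
    have hp2 : ∀ c : α, stage F f c ≤ f + 1 := fun c => stage_le_succ c
    have hFlt : ∀ m, 1 ≤ m → m ≤ f + 1 →
        F {c : α | stage F f c < m} = F^[m] (∅ : Set α) := F_stageLt hF hf
    have hex : ∀ k, 1 ≤ k → k ≤ f → ∃ c : α, stage F f c = k := exists_stage hF hf hfmin
    have hf0 : F (∅ : Set α) = ∅ ↔ f = 0 := Fempty_eq_iff hf hfmin
    have hFe : F (∅ : Set α) = F^[1] (∅ : Set α) := by rw [Function.iterate_one]
    simp only [G, I, Quint.lt, Quint.le, Quint.nlt, Quint.nle, Quint.imm, Prod.mk.injEq]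
    refine ⟨?_, ?_, ?_, ?_, ?_⟩
    · -- lt
      ext ⟨a, b⟩
      simp only [Set.mem_setOf_eq]
      constructor
      · rintro ⟨c, ⟨hc1, hc2⟩, hc3⟩
        omega
      · intro h
        have ha1 := hp1 a
        have hb2 := hp2 b
        obtain ⟨c, hc⟩ := hex (stage F f b - 1) (by omega) (by omega)
        exact ⟨c, ⟨by omega, by omega⟩, by omega⟩
    · -- le
      ext ⟨a, b⟩
      simp only [Set.mem_setOf_eq]
      rw [hFlt _ (hp1 b) (hp2 b), hm]
    · -- nlt
      ext ⟨a, b⟩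
      simp only [Set.mem_setOf_eq, ge_iff_le, gt_iff_lt]
      rw [hf0, hFe, hm]
      have ha1 := hp1 a
      have hb1 := hp1 b
      have ha2 := hp2 a
      have hb2 := hp2 b
      constructor
      · rintro (h | ⟨c, hc1, hc2⟩ | h) <;> omega
      · intro h
        by_cases hf' : f = 0
        · exact Or.inr (Or.inr hf')
        · by_cases hb : stage F f b ≤ 1
          · exact Or.inl ⟨hb, by omega⟩
          · refine Or.inr (Or.inl ?_)
            obtain ⟨c, hc⟩ := hex (stage F f b - 1) (by omega) (by omega)
            exact ⟨c, by omega, by omega⟩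
    · -- nle
      ext ⟨a, b⟩
      simp only [Set.mem_setOf_eq, ge_iff_le, gt_iff_lt, not_le]
      rw [hFlt _ (hp1 b) (hp2 b), hm]
      have ha2 := hp2 a
      omega
    · -- imm
      ext ⟨a, b⟩
      simp only [Set.mem_setOf_eq, ge_iff_le, gt_iff_lt, not_le]
      have e2 : {c : α | stage F f c ≤ stage F f a ∧ stage F f c ≤ f} = F^[stage F f a] (∅ : Set α) := by
        ext c
        simp only [Set.mem_setOf_eq]
        rw [hm]
      have e4 : {c' : α | ¬(stage F f a < stage F f c' ∨ stage F f c' = f + 1)} =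
          F^[stage F f a] (∅ : Set α) := by
        ext c
        simp only [Set.mem_setOf_eq]
        rw [hm]
        have := hp2 c
        omega
      rw [e2, e4, hFlt _ (hp1 a) (hp2 a), ← Function.iterate_succ_apply' F (stage F f a) ∅]
      have e6 : (∀ c : α, c ∈ F^[stage F f a + 1] (∅ : Set α) → c ∈ F^[stage F f a] ∅) ↔
          f ≤ stage F f a := by
        constructor
        · intro h
          apply hfmin
          exact Set.Subset.antisymm (fun c hc => h c hc) (iterEmpty_mono hF (Nat.le_succ _))
        · intro h
          rw [iterEmpty_stab hF hf (stage F f a + 1) (by omega), iterEmpty_stab hF hf (stage F f a) h]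
          exact fun c hc => hc
      rw [e6]
      simp only [hm]
      have ha1 := hp1 a
      have hb1 := hp1 b
      have ha2 := hp2 a
      have hb2 := hp2 b
      omega
  · -- minimality
    have hm : ∀ (c : α) (l : ℕ), c ∈ F^[l] (∅ : Set α) ↔ stage F f c ≤ l ∧ stage F f c ≤ f :=
      mem_iterEmpty_iff hF hf
    have hp1 : ∀ c : α, 1 ≤ stage F f c := fun c => stage_pos c
    have hp2 : ∀ c : α, stage F f c ≤ f + 1 := fun c => stage_le_succ c
    have hFlt : ∀ m, 1 ≤ m → m ≤ f + 1 →
        F {c : α | stage F f c < m} = F^[m] (∅ : Set α) := F_stageLt hF hf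
    have hex : ∀ k, 1 ≤ k → k ≤ f → ∃ c : α, stage F f c = k := exists_stage hF hf hfmin
    have hf0 : F (∅ : Set α) = ∅ ↔ f = 0 := Fempty_eq_iff hf hfmin
    intro R hR
    have mLT : ∀ a b : α, ((a, b) ∈ R.lt ↔ ∃ c, (a, c) ∈ R.le ∧ (c, b) ∈ R.imm) := by
      intro a b
      conv_lhs => rw [← hR]
      exact Iff.rfl
    have mLE : ∀ a b : α, ((a, b) ∈ R.le ↔ a ∈ F {c : α | (c, b) ∈ R.lt}) := by
      intro a b
      conv_lhs => rw [← hR]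
      exact Iff.rfl
    have mNLT : ∀ a b : α, ((a, b) ∈ R.nlt ↔ b ∈ F ∅ ∨
        (∃ c : α, (a, c) ∈ R.nle ∧ (c, b) ∈ R.imm) ∨ F ∅ = ∅) := by
      intro a b
      conv_lhs => rw [← hR]
      exact Iff.rfl
    have mNLE : ∀ a b : α, ((a, b) ∈ R.nle ↔ a ∉ F {c : α | (c, b) ∉ R.nlt}) := by
      intro a b
      conv_lhs => rw [← hR]
      exact Iff.rfl
    have mIMM : ∀ a b : α, ((a, b) ∈ R.imm ↔ a ∈ F {c : α | (c, a) ∈ R.lt} ∧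
        b ∉ F {c : α | (c, a) ∉ R.nlt} ∧
        (b ∈ F {c : α | (c, a) ∈ R.le} ∨
          ∀ c : α, c ∈ F {c' : α | (c', a) ∉ R.nle} → c ∈ F {c' : α | (c', a) ∈ R.lt})) := by
      intro a b
      conv_lhs => rw [← hR]
      exact Iff.rfl
    have main : ∀ m : ℕ, ∀ a b : α, stage F f b = m →
        ((stage F f a + 1 = stage F f b → (a, b) ∈ R.imm) ∧
         (stage F f a < stage F f b → (a, b) ∈ R.lt) ∧
         (stage F f a ≤ stage F f b ∧ stage F f a ≤ f → (a, b) ∈ R.le) ∧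
         (stage F f b ≤ stage F f a → (a, b) ∈ R.nlt) ∧
         (stage F f b < stage F f a ∨ stage F f a = f + 1 → (a, b) ∈ R.nle)) := by
      intro m
      induction m using Nat.strong_induction_on with
      | _ m ih =>
        have hE : ∀ a b : α, stage F f b = m → stage F f a + 1 = stage F f b →
            (a, b) ∈ R.imm := by
          intro a b hb hab
          have hsa_lt : stage F f a < m := by omega
          have hsaf : stage F f a ≤ f := by have := hp2 b; omega
          have sub1 : {c : α | stage F f c < stage F f a} ⊆ {c : α | (c, a) ∈ R.lt} :=
            fun c hc => (ih _ hsa_lt c a rfl).2.1 hc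
          have sub2 : {c : α | (c, a) ∉ R.nlt} ⊆ {c : α | stage F f c < stage F f a} := by
            intro c hc
            simp only [Set.mem_setOf_eq]
            by_contra hcon
            exact hc ((ih _ hsa_lt c a rfl).2.2.2.1 (by omega))
          rw [mIMM]
          refine ⟨?_, ?_, ?_⟩
          · apply hF sub1
            rw [hFlt _ (hp1 a) (hp2 a), hm]
            exact ⟨le_rfl, hsaf⟩
          · intro hmem
            have h2 := hF sub2 hmem
            rw [hFlt _ (hp1 a) (hp2 a), hm] at h2
            omega
          · by_cases hsb : stage F f b ≤ f
            · left
              have sub3 : F^[stage F f a] (∅ : Set α) ⊆ {c : α | (c, a) ∈ R.le} := by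
                intro c hc
                rw [hm] at hc
                exact (ih _ hsa_lt c a rfl).2.2.1 ⟨hc.1, hc.2⟩
              have hb' : b ∈ F (F^[stage F f a] (∅ : Set α)) := by
                rw [← Function.iterate_succ_apply' F (stage F f a) ∅, hm]
                omega
              exact hF sub3 hb'
            · right
              intro c0 hc0
              have sub4 : {c' : α | (c', a) ∉ R.nle} ⊆ F^[stage F f a] (∅ : Set α) := by
                intro c' hc'
                rw [hm]
                by_contra hcon
                apply hc'
                exact (ih _ hsa_lt c' a rfl).2.2.2.2 (by have := hp2 c'; omega)
              have hcc : c0 ∈ F (F^[stage F f a] (∅ : Set α)) := hF sub4 hc0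
              rw [← Function.iterate_succ_apply' F (stage F f a) ∅] at hcc
              have hsaf' : stage F f a = f := by have := hp2 b; omega
              rw [hsaf', hf, ← hsaf'] at hcc
              apply hF sub1
              rw [hFlt _ (hp1 a) (hp2 a)]
              exact hcc
        have hA : ∀ a b : α, stage F f b = m → stage F f a < stage F f b → (a, b) ∈ R.lt := by
          intro a b hb hab
          have hb1 := hp1 b
          have hb2 := hp2 b
          have ha1 := hp1 a
          obtain ⟨c, hc⟩ := hex (stage F f b - 1) (by omega) (by omega)
          rw [mLT]
          refine ⟨c, ?_, hE c b hb (by omega)⟩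
          exact (ih (stage F f c) (by omega) a c rfl).2.2.1 ⟨by omega, by omega⟩
        have hB : ∀ a b : α, stage F f b = m →
            stage F f a ≤ stage F f b ∧ stage F f a ≤ f → (a, b) ∈ R.le := by
          intro a b hb hab
          rw [mLE]
          have sub : {c : α | stage F f c < stage F f b} ⊆ {c : α | (c, b) ∈ R.lt} :=
            fun c hc => hA c b hb hc
          apply hF sub
          rw [hFlt _ (hp1 b) (hp2 b), hm]
          exact hab
        have hC : ∀ a b : α, stage F f b = m → stage F f b ≤ stage F f a → (a, b) ∈ R.nlt := by
          intro a b hb hab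
          rw [mNLT]
          by_cases hf' : f = 0
          · exact Or.inr (Or.inr (hf0.mpr hf'))
          · by_cases hb1 : stage F f b ≤ 1
            · left
              have hbm : b ∈ F^[1] (∅ : Set α) := by
                rw [hm]
                have := hp1 b
                omega
              rwa [Function.iterate_one] at hbm
            · refine Or.inr (Or.inl ?_)
              have hb2 := hp2 b
              obtain ⟨c, hc⟩ := hex (stage F f b - 1) (by omega) (by omega)
              refine ⟨c, ?_, hE c b hb (by omega)⟩
              exact (ih (stage F f c) (by omega) a c rfl).2.2.2.2 (Or.inl (by omega))
        have hD : ∀ a b : α, stage F f b = m →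
            (stage F f b < stage F f a ∨ stage F f a = f + 1) → (a, b) ∈ R.nle := by
          intro a b hb hab
          rw [mNLE]
          intro hmem
          have sub : {c : α | (c, b) ∉ R.nlt} ⊆ {c : α | stage F f c < stage F f b} := by
            intro c hc
            simp only [Set.mem_setOf_eq]
            by_contra hcon
            exact hc (hC c b hb (by omega))
          have h2 := hF sub hmem
          rw [hFlt _ (hp1 b) (hp2 b), hm] at h2
          have := hp2 a
          omega
        intro a b hb
        exact ⟨hE a b hb, hA a b hb, hB a b hb, hC a b hb, hD a b hb⟩
    simp only [Prod.le_def]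
    refine ⟨?_, ?_, ?_, ?_, ?_⟩
    · rintro ⟨a, b⟩ hp
      exact (main (stage F f b) a b rfl).2.1 hp
    · rintro ⟨a, b⟩ hp
      exact (main (stage F f b) a b rfl).2.2.1 hp
    · rintro ⟨a, b⟩ hp
      exact (main (stage F f b) a b rfl).2.2.2.1 hp
    · rintro ⟨a, b⟩ hp
      exact (main (stage F f b) a b rfl).2.2.2.2 hp
    · rintro ⟨a, b⟩ hp
      exact (main (stage F f b) a b rfl).1 hp
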